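/- Let H be a tree-based hierarchy with canonical aggregation matrix A, positive initial predictions ŷ, and top-heavy weight matrices W(M). Then for every item n the limit y*_n := lim_{M→∞} y_n(M) exists and is finite, and for every constraint k and every child s ∈ C_k, y*_s = (ŷ_s / Σ_{c∈C_k} ŷ_c) · y*_{p_k}; that is, the limit corresponds to share-based disaggregation with shares proportional to ŷ. -/

import Mathlib

open Matrix Filter Topology

/-- A tree-based hierarchy in canonical form on items `Fin N` with `K` constraints.
Constraint `k` has parent item `parent k` and nonempty child set `children k`;
each item is a child in at most one constraint, and the height function satisfies
`H(c) = H(p_k) - 1` (equivalently `H(p_k) = H(c) + 1`) for every child `c` of `p_k`. -/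
structure TreeHierarchy (N K : ℕ) where
  parent : Fin K → Fin N
  children : Fin K → Finset (Fin N)
  children_nonempty : ∀ k, (children k).Nonempty
  parent_notMem : ∀ k, parent k ∉ children k
  child_unique : ∀ k j : Fin K, ∀ n : Fin N, n ∈ children k → n ∈ children j → k = j
  height : Fin N → ℕ
  height_child : ∀ k : Fin K, ∀ c ∈ children k, height (parent k) = height c + 1

variable {N K : ℕ}

/-- The canonical aggregation matrix of a tree-based hierarchy:
`A k (p_k) = 1`, `A k c = -1` for `c ∈ C_k`, and `0` otherwise. -/
noncomputable def aggMatrix (T : TreeHierarchy N K) : Matrix (Fin K) (Fin N) ℝ :=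
  fun k n => if n = T.parent k then 1 else if n ∈ T.children k then -1 else 0

/-- The top-heavy weight matrix: diagonal with entries `w_n(M) = M^(H n) / yhat n`. -/
noncomputable def topW (T : TreeHierarchy N K) (yhat : Fin N → ℝ) (M : ℝ) :
    Matrix (Fin N) (Fin N) ℝ :=
  Matrix.diagonal fun n => M ^ T.height n / yhat n

/-- `λ(M) = (A W(M)⁻¹ Aᵀ)⁻¹ A ŷ`. -/
noncomputable def lamTop (T : TreeHierarchy N K) (yhat : Fin N → ℝ) (M : ℝ) : Fin K → ℝ :=
  (aggMatrix T * (topW T yhat M)⁻¹ * (aggMatrix T)ᵀ)⁻¹.mulVec ((aggMatrix T).mulVec yhat)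

/-- `y(M) = ŷ - W(M)⁻¹ Aᵀ λ(M)`. -/
noncomputable def yTop (T : TreeHierarchy N K) (yhat : Fin N → ℝ) (M : ℝ) : Fin N → ℝ :=
  yhat - ((topW T yhat M)⁻¹ * (aggMatrix T)ᵀ).mulVec (lamTop T yhat M)

namespace ShareAux

variable (T : TreeHierarchy N K) (yhat : Fin N → ℝ)

/-- column-rescaled Gram matrix -/
noncomputable def Cmat (M : ℝ) : Matrix (Fin K) (Fin K) ℝ :=
  fun k j => (aggMatrix T * (topW T yhat M)⁻¹ * (aggMatrix T)ᵀ) k j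
    * M ^ ((T.height (T.parent j) : ℤ) - 1)

/-- limit of `Cmat` as `M → ∞` -/
noncomputable def Cinf : Matrix (Fin K) (Fin K) ℝ :=
  fun k j => if k = j then ∑ c ∈ T.children j, yhat c
    else if T.parent k ∈ T.children j then -(yhat (T.parent k)) else 0

noncomputable def mustar : Fin K → ℝ :=
  (Cinf T yhat)⁻¹.mulVec ((aggMatrix T).mulVec yhat)

lemma topW_inv (hy : ∀ n, 0 < yhat n) {M : ℝ} (hM : 0 < M) :
    (topW T yhat M)⁻¹ = Matrix.diagonal (fun n => yhat n * M ^ (-(T.height n : ℤ))) := by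
  apply Matrix.inv_eq_right_inv
  rw [topW, Matrix.diagonal_mul_diagonal]
  convert Matrix.diagonal_one with n
  rw [_root_.zpow_neg, zpow_natCast]
  have h1 : yhat n ≠ 0 := (hy n).ne'
  have h2 : M ^ T.height n ≠ 0 := pow_ne_zero _ hM.ne'
  field_simp

lemma gram_apply (hy : ∀ n, 0 < yhat n) {M : ℝ} (hM : 0 < M) (k j : Fin K) :
    (aggMatrix T * (topW T yhat M)⁻¹ * (aggMatrix T)ᵀ) k j
      = ∑ n, aggMatrix T k n * aggMatrix T j n * (yhat n * M ^ (-(T.height n : ℤ))) := by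
  rw [topW_inv T yhat hy hM, Matrix.mul_apply]
  refine Finset.sum_congr rfl fun n _ => ?_
  rw [Matrix.mul_diagonal, Matrix.transpose_apply]
  ring

/-- coefficient of a term in the rescaled Gram matrix -/
noncomputable def cterm (k j : Fin K) (n : Fin N) : ℝ :=
  aggMatrix T k n * aggMatrix T j n * yhat n

/-- exponent of a term in the rescaled Gram matrix -/
def eexp (T : TreeHierarchy N K) (j : Fin K) (n : Fin N) : ℤ :=
  (T.height (T.parent j) : ℤ) - 1 - T.height n

lemma cmat_apply (hy : ∀ n, 0 < yhat n) {M : ℝ} (hM : 0 < M) (k j : Fin K) :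
    Cmat T yhat M k j = ∑ n, cterm T yhat k j n * M ^ eexp T j n := by
  simp only [cterm, eexp]
  rw [Cmat, gram_apply T yhat hy hM, Finset.sum_mul]
  refine Finset.sum_congr rfl fun n _ => ?_
  rw [show ((T.height (T.parent j) : ℤ) - 1 - T.height n)
      = (-(T.height n : ℤ)) + ((T.height (T.parent j) : ℤ) - 1) by ring,
    zpow_add₀ (ne_of_gt hM)]
  ring

lemma agg_row_sum (k : Fin K) (f : Fin N → ℝ) :
    ∑ n, aggMatrix T k n * f n = f (T.parent k) - ∑ c ∈ T.children k, f c := by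
  have : ∀ n, aggMatrix T k n * f n
      = (if n = T.parent k then f n else 0) + (if n ∈ T.children k then -f n else 0) := by
    intro n
    by_cases h1 : n = T.parent k
    · subst h1
      simp [aggMatrix, T.parent_notMem k]
    · by_cases h2 : n ∈ T.children k <;> simp [aggMatrix, h1, h2]
  rw [Finset.sum_congr rfl fun n _ => this n, Finset.sum_add_distrib,
    Finset.sum_ite_eq' Finset.univ (T.parent k) f, Finset.sum_ite_mem, Finset.univ_inter,
    Finset.sum_neg_distrib]
  simp only [Finset.mem_univ, if_true]
  ring

lemma agg_cases {j : Fin K} {n : Fin N} (h : aggMatrix T j n ≠ 0) :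
    n = T.parent j ∨ n ∈ T.children j := by
  by_contra hn
  push_neg at hn
  simp [aggMatrix, hn.1, hn.2] at h

lemma agg_parent (k : Fin K) : aggMatrix T k (T.parent k) = 1 := by simp [aggMatrix]

lemma agg_child {k : Fin K} {n : Fin N} (h : n ∈ T.children k) : aggMatrix T k n = -1 := by
  have hne : n ≠ T.parent k := fun e => T.parent_notMem k (e ▸ h)
  simp [aggMatrix, hne, h]

lemma height_child_int {j : Fin K} {n : Fin N} (h : n ∈ T.children j) :
    (T.height n : ℤ) = (T.height (T.parent j) : ℤ) - 1 := by
  have := T.height_child j n h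
  omega

lemma eexp_child {j : Fin K} {n : Fin N} (h : n ∈ T.children j) : eexp T j n = 0 := by
  rw [eexp, height_child_int T h]
  ring

lemma eexp_parent (j : Fin K) : eexp T j (T.parent j) = -1 := by
  rw [eexp]
  ring

lemma tendsto_cmat (hy : ∀ n, 0 < yhat n) (k j : Fin K) :
    Tendsto (fun M : ℝ => Cmat T yhat M k j) atTop (𝓝 (Cinf T yhat k j)) := by
  have hev : (fun M : ℝ => ∑ n, cterm T yhat k j n * M ^ eexp T j n)
      =ᶠ[atTop] fun M => Cmat T yhat M k j := by
    filter_upwards [eventually_gt_atTop (0 : ℝ)] with M hM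
    exact (cmat_apply T yhat hy hM k j).symm
  refine Tendsto.congr' hev ?_
  have key : Tendsto (fun M : ℝ => ∑ n, cterm T yhat k j n * M ^ eexp T j n) atTop
      (𝓝 (∑ n, if eexp T j n = 0 then cterm T yhat k j n else 0)) := by
    refine tendsto_finset_sum _ fun n _ => ?_
    by_cases h0 : eexp T j n = 0
    · simp only [h0, if_true, zpow_zero, mul_one]
      exact tendsto_const_nhds
    · simp only [h0, if_false]
      by_cases hc : cterm T yhat k j n = 0
      · simp only [hc, zero_mul]
        exact tendsto_const_nhds
      · have hj : aggMatrix T j n ≠ 0 := by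
          intro h
          exact hc (by rw [cterm, h]; ring)
        have hlt : eexp T j n < 0 := by
          rcases agg_cases T hj with h | h
          · rw [h, eexp_parent]
            norm_num
          · exact absurd (eexp_child T h) h0
        simpa using (tendsto_zpow_atTop_zero hlt).const_mul (cterm T yhat k j n)
  have hsum : (∑ n, if eexp T j n = 0 then cterm T yhat k j n else 0) = Cinf T yhat k j := by
    by_cases hkj : k = j
    · subst hkj
      have hpt : ∀ n, (if eexp T k n = 0 then cterm T yhat k k n else 0)
          = (if n ∈ T.children k then yhat n else 0) := by
        intro n
        by_cases hn : n ∈ T.children k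
        · have hc : cterm T yhat k k n = yhat n := by
            rw [cterm, agg_child T hn]
            ring
          rw [if_pos (eexp_child T hn), if_pos hn, hc]
        · rw [if_neg hn]
          by_cases he : eexp T k n = 0
          · have hnp : n ≠ T.parent k := by
              intro h
              rw [h, eexp_parent] at he
              norm_num at he
            have hA : aggMatrix T k n = 0 := by simp [aggMatrix, hnp, hn]
            rw [if_pos he, cterm, hA]
            ring
          · rw [if_neg he]
      rw [Finset.sum_congr rfl fun n _ => hpt n, Finset.sum_ite_mem, Finset.univ_inter]
      simp [Cinf]
    · have hpt : ∀ n, (if eexp T j n = 0 then cterm T yhat k j n else 0)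
          = (if n = T.parent k then
              (if T.parent k ∈ T.children j then -(yhat (T.parent k)) else 0) else 0) := by
        intro n
        by_cases hn : n = T.parent k
        · rw [if_pos hn]
          by_cases hp : T.parent k ∈ T.children j
          · have he : eexp T j n = 0 := hn ▸ eexp_child T hp
            rw [if_pos he, if_pos hp, cterm, hn, agg_child T hp, agg_parent]
            ring
          · rw [if_neg hp]
            by_cases he : eexp T j n = 0
            · have hnp : n ≠ T.parent j := by
                intro h
                rw [h, eexp_parent] at he
                norm_num at he
              have hnc : n ∉ T.children j := hn ▸ hp
              have hA : aggMatrix T j n = 0 := by simp [aggMatrix, hnp, hnc]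
              rw [if_pos he, cterm, hA]
              ring
            · rw [if_neg he]
        · rw [if_neg hn]
          by_cases he : eexp T j n = 0
          · have hcz : cterm T yhat k j n = 0 := by
              rw [cterm]
              by_cases hAk : aggMatrix T k n = 0
              · rw [hAk]; ring
              · by_cases hAj : aggMatrix T j n = 0
                · rw [hAj]; ring
                · rcases agg_cases T hAk with h1 | h1
                  · exact absurd h1 hn
                  · rcases agg_cases T hAj with h2 | h2
                    · rw [h2, eexp_parent] at he
                      norm_num at he
                    · exact absurd (T.child_unique k j n h1 h2) hkj
            rw [if_pos he, hcz]
          · rw [if_neg he]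
      rw [Finset.sum_congr rfl fun n _ => hpt n, Finset.sum_ite_eq' Finset.univ (T.parent k)]
      simp [Cinf, hkj]
  exact hsum ▸ key

lemma sigma_pos (hy : ∀ n, 0 < yhat n) (k : Fin K) : 0 < ∑ c ∈ T.children k, yhat c :=
  Finset.sum_pos (fun c _ => hy c) (T.children_nonempty k)

lemma cinf_mulVec (w : Fin K → ℝ) (k : Fin K) :
    (Cinf T yhat).mulVec w k = (∑ c ∈ T.children k, yhat c) * w k
      - yhat (T.parent k)
        * ∑ j ∈ Finset.univ.filter (fun j => T.parent k ∈ T.children j), w j := by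
  have hpt : ∀ j, Cinf T yhat k j * w j
      = (if j = k then (∑ c ∈ T.children k, yhat c) * w k else 0)
        + (if T.parent k ∈ T.children j then -(yhat (T.parent k)) * w j else 0) := by
    intro j
    by_cases hjk : j = k
    · subst hjk
      simp [Cinf, T.parent_notMem j]
    · have hkj : ¬ k = j := fun h => hjk h.symm
      by_cases hp : T.parent k ∈ T.children j <;> simp [Cinf, hkj, hjk, hp]
  show (∑ j, Cinf T yhat k j * w j) = _
  rw [Finset.sum_congr rfl fun j _ => hpt j, Finset.sum_add_distrib,
    Finset.sum_ite_eq' Finset.univ k, ← Finset.sum_filter, ← Finset.mul_sum, neg_mul]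
  simp only [Finset.mem_univ, if_true]
  ring

lemma det_cinf (hy : ∀ n, 0 < yhat n) : IsUnit (Cinf T yhat).det := by
  rw [isUnit_iff_ne_zero]
  intro hdet
  obtain ⟨w, hw0, hw⟩ := (Matrix.exists_mulVec_eq_zero_iff).2 hdet
  set B := Finset.univ.sup (fun k : Fin K => T.height (T.parent k)) with hB
  have main : ∀ m : ℕ, ∀ k : Fin K, B ≤ T.height (T.parent k) + m → w k = 0 := by
    intro m
    induction m with
    | zero =>
      intro k hk
      have h0 : (Cinf T yhat).mulVec w k = 0 := congrFun hw k
      rw [cinf_mulVec] at h0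
      have hfe : Finset.univ.filter (fun j => T.parent k ∈ T.children j) = ∅ := by
        ext j
        simp only [Finset.mem_filter, Finset.mem_univ, true_and, Finset.notMem_empty,
          iff_false]
        intro hj
        have h1 := T.height_child j _ hj
        have h2 : T.height (T.parent j) ≤ B :=
          Finset.le_sup (f := fun k : Fin K => T.height (T.parent k)) (Finset.mem_univ j)
        omega
      rw [hfe, Finset.sum_empty, mul_zero, sub_zero, mul_eq_zero] at h0
      rcases h0 with h0 | h0
      · exact absurd h0 (sigma_pos T yhat hy k).ne'
      · exact h0
    | succ m ih =>
      intro k hk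
      have h0 : (Cinf T yhat).mulVec w k = 0 := congrFun hw k
      rw [cinf_mulVec] at h0
      have hz : ∑ j ∈ Finset.univ.filter (fun j => T.parent k ∈ T.children j), w j = 0 := by
        refine Finset.sum_eq_zero fun j hj => ?_
        rw [Finset.mem_filter] at hj
        have h1 := T.height_child j _ hj.2
        exact ih j (by omega)
      rw [hz, mul_zero, sub_zero, mul_eq_zero] at h0
      rcases h0 with h0 | h0
      · exact absurd h0 (sigma_pos T yhat hy k).ne'
      · exact h0
  refine hw0 (funext fun k => main B k ?_)
  exact Nat.le_add_left _ _

lemma mustar_row (hy : ∀ n, 0 < yhat n) (k : Fin K) :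
    (∑ c ∈ T.children k, yhat c) * mustar T yhat k
      - yhat (T.parent k)
        * ∑ j ∈ Finset.univ.filter (fun j => T.parent k ∈ T.children j), mustar T yhat j
      = yhat (T.parent k) - ∑ c ∈ T.children k, yhat c := by
  have h1 : (Cinf T yhat).mulVec (mustar T yhat) = (aggMatrix T).mulVec yhat := by
    rw [mustar, Matrix.mulVec_mulVec, Matrix.mul_nonsing_inv _ (det_cinf T yhat hy),
      Matrix.one_mulVec]
  have h2 := congrFun h1 k
  rw [cinf_mulVec] at h2
  rw [h2]
  show (∑ n, aggMatrix T k n * yhat n) = _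
  rw [agg_row_sum]

/-- diagonal rescaling matrix -/
noncomputable def Emat (T : TreeHierarchy N K) (M : ℝ) : Matrix (Fin K) (Fin K) ℝ :=
  Matrix.diagonal (fun j => M ^ ((T.height (T.parent j) : ℤ) - 1))

lemma cmat_eq (M : ℝ) :
    Cmat T yhat M = (aggMatrix T * (topW T yhat M)⁻¹ * (aggMatrix T)ᵀ) * Emat T M := by
  ext k j
  rw [Emat, Matrix.mul_diagonal]
  rfl

lemma det_emat {M : ℝ} (hM : 0 < M) : IsUnit (Emat T M).det := by
  rw [Emat, Matrix.det_diagonal]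
  exact isUnit_iff_ne_zero.2 (Finset.prod_ne_zero_iff.2 fun j _ => zpow_ne_zero _ hM.ne')

lemma det_cmat
    (hinv : ∀ M : ℝ, 0 < M →
      IsUnit (aggMatrix T * (topW T yhat M)⁻¹ * (aggMatrix T)ᵀ).det)
    {M : ℝ} (hM : 0 < M) : IsUnit (Cmat T yhat M).det := by
  rw [cmat_eq, Matrix.det_mul]
  exact (hinv M hM).mul (det_emat T hM)

lemma lam_eq (hy : ∀ n, 0 < yhat n) {M : ℝ} (hM : 0 < M) :
    lamTop T yhat M = fun k => M ^ ((T.height (T.parent k) : ℤ) - 1)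
      * ((Cmat T yhat M)⁻¹.mulVec ((aggMatrix T).mulVec yhat)) k := by
  have hG : aggMatrix T * (topW T yhat M)⁻¹ * (aggMatrix T)ᵀ
      = Cmat T yhat M * (Emat T M)⁻¹ := by
    rw [cmat_eq, Matrix.mul_assoc _ (Emat T M) (Emat T M)⁻¹,
      Matrix.mul_nonsing_inv _ (det_emat T hM), Matrix.mul_one]
  rw [lamTop, hG, Matrix.mul_inv_rev, Matrix.nonsing_inv_nonsing_inv _ (det_emat T hM),
    ← Matrix.mulVec_mulVec]
  funext k
  rw [Emat, Matrix.mulVec_diagonal]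

lemma ytop_eq (hy : ∀ n, 0 < yhat n) {M : ℝ} (hM : 0 < M) (n : Fin N) :
    yTop T yhat M n = yhat n - ∑ k, (yhat n * aggMatrix T k n * M ^ eexp T k n)
      * ((Cmat T yhat M)⁻¹.mulVec ((aggMatrix T).mulVec yhat)) k := by
  simp only [eexp]
  rw [yTop]
  simp only [Pi.sub_apply]
  congr 1
  rw [topW_inv T yhat hy hM]
  show (∑ k, (Matrix.diagonal (fun n => yhat n * M ^ (-(T.height n : ℤ)))
      * (aggMatrix T)ᵀ) n k * lamTop T yhat M k) = _
  rw [lam_eq T yhat hy hM]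
  refine Finset.sum_congr rfl fun k _ => ?_
  rw [Matrix.diagonal_mul, Matrix.transpose_apply]
  rw [show ((T.height (T.parent k) : ℤ) - 1 - T.height n)
      = (-(T.height n : ℤ)) + ((T.height (T.parent k) : ℤ) - 1) by ring,
    zpow_add₀ hM.ne']
  ring

lemma tendsto_mu (hy : ∀ n, 0 < yhat n) (k : Fin K) :
    Tendsto (fun M : ℝ => ((Cmat T yhat M)⁻¹.mulVec ((aggMatrix T).mulVec yhat)) k) atTop
      (𝓝 (mustar T yhat k)) := by
  have hC : Tendsto (fun M : ℝ => Cmat T yhat M) atTop (𝓝 (Cinf T yhat)) := by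
    refine tendsto_pi_nhds.2 ?_
    intro a
    refine tendsto_pi_nhds.2 ?_
    intro b
    exact tendsto_cmat T yhat hy a b
  have hcont : ContinuousAt Inv.inv (Cinf T yhat) := by
    apply continuousAt_matrix_inv
    have h := NormedRing.inverse_continuousAt (det_cinf T yhat hy).unit
    rwa [(det_cinf T yhat hy).unit_spec] at h
  have hInv : Tendsto (fun M : ℝ => (Cmat T yhat M)⁻¹) atTop (𝓝 (Cinf T yhat)⁻¹) :=
    hcont.tendsto.comp hC
  have hentry : ∀ b, Tendsto (fun M : ℝ => (Cmat T yhat M)⁻¹ k b) atTop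
      (𝓝 ((Cinf T yhat)⁻¹ k b)) := fun b =>
    ((continuous_apply b).tendsto _).comp (((continuous_apply k).tendsto _).comp hInv)
  have := tendsto_finset_sum (Finset.univ : Finset (Fin K))
    (fun j _ => (hentry j).mul_const (((aggMatrix T).mulVec yhat) j))
  exact this

end ShareAux

/-- With top-heavy weights, `y(M)` converges as `M → ∞` and the limit
is the share-based disaggregation with shares proportional to `ŷ`. -/
theorem share_based_disaggregation (T : TreeHierarchy N K) (yhat : Fin N → ℝ)
    (hy : ∀ n, 0 < yhat n)
    (hinv : ∀ M : ℝ, 0 < M →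
      IsUnit (aggMatrix T * (topW T yhat M)⁻¹ * (aggMatrix T)ᵀ).det) :
    ∃ ystar : Fin N → ℝ,
      (∀ n, Tendsto (fun M : ℝ => yTop T yhat M n) atTop (𝓝 (ystar n))) ∧
      ∀ k : Fin K, ∀ s ∈ T.children k,
        ystar s = (yhat s / ∑ c ∈ T.children k, yhat c) * ystar (T.parent k) := by
  classical
  refine ⟨fun n => yhat n + yhat n
      * ∑ k ∈ Finset.univ.filter (fun k => n ∈ T.children k), ShareAux.mustar T yhat k,
    ?_, ?_⟩
  · intro n
    have hterm : ∀ k : Fin K, Tendsto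
        (fun M : ℝ => (yhat n * aggMatrix T k n * M ^ ShareAux.eexp T k n)
          * ((ShareAux.Cmat T yhat M)⁻¹.mulVec ((aggMatrix T).mulVec yhat)) k) atTop
        (𝓝 ((if n ∈ T.children k then -(yhat n) else 0) * ShareAux.mustar T yhat k)) := by
      intro k
      refine Tendsto.mul ?_ (ShareAux.tendsto_mu T yhat hy k)
      by_cases hn : n ∈ T.children k
      · rw [if_pos hn]
        have he := ShareAux.eexp_child T hn
        have hA := ShareAux.agg_child T hn
        simp only [he, zpow_zero, mul_one, hA]
        simpa using tendsto_const_nhds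
      · rw [if_neg hn]
        by_cases hA : aggMatrix T k n = 0
        · simp only [hA, mul_zero, zero_mul]
          exact tendsto_const_nhds
        · have hp : n = T.parent k := (ShareAux.agg_cases T hA).resolve_right hn
          have he : ShareAux.eexp T k n = -1 := hp ▸ ShareAux.eexp_parent T k
          rw [he]
          have := (tendsto_zpow_atTop_zero (by norm_num : (-1 : ℤ) < 0)).const_mul
            (yhat n * aggMatrix T k n)
          simpa [mul_assoc] using this
    have hsumlim : Tendsto (fun M : ℝ => yhat n
        - ∑ k, (yhat n * aggMatrix T k n * M ^ ShareAux.eexp T k n)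
          * ((ShareAux.Cmat T yhat M)⁻¹.mulVec ((aggMatrix T).mulVec yhat)) k) atTop
        (𝓝 (yhat n - ∑ k, (if n ∈ T.children k then -(yhat n) else 0)
          * ShareAux.mustar T yhat k)) :=
      tendsto_const_nhds.sub (tendsto_finset_sum _ fun k _ => hterm k)
    have hval : yhat n - ∑ k, (if n ∈ T.children k then -(yhat n) else 0)
        * ShareAux.mustar T yhat k
        = yhat n + yhat n
          * ∑ k ∈ Finset.univ.filter (fun k => n ∈ T.children k), ShareAux.mustar T yhat k := by
      have : ∀ k : Fin K, (if n ∈ T.children k then -(yhat n) else 0) * ShareAux.mustar T yhat k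
          = (if n ∈ T.children k then -(yhat n) * ShareAux.mustar T yhat k else 0) := by
        intro k
        by_cases hn : n ∈ T.children k <;> simp [hn]
      rw [Finset.sum_congr rfl fun k _ => this k, ← Finset.sum_filter, ← Finset.mul_sum,
        neg_mul]
      ring
    rw [hval] at hsumlim
    refine Tendsto.congr' ?_ hsumlim
    filter_upwards [eventually_gt_atTop (0 : ℝ)] with M hM
    exact (ShareAux.ytop_eq T yhat hy hM n).symm
  · intro k s hs
    have hσ : 0 < ∑ c ∈ T.children k, yhat c := ShareAux.sigma_pos T yhat hy k
    have hfilter : Finset.univ.filter (fun j => s ∈ T.children j) = {k} := by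
      ext j
      simp only [Finset.mem_filter, Finset.mem_univ, true_and, Finset.mem_singleton]
      exact ⟨fun hj => T.child_unique j k s hj hs, fun h => h ▸ hs⟩
    have key := ShareAux.mustar_row T yhat hy k
    beta_reduce
    rw [hfilter, Finset.sum_singleton]
    rw [div_mul_eq_mul_div, eq_div_iff hσ.ne']
    linear_combination yhat s * key
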